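/- If the complement ℕ \ range(a) is infinite, then the h-shuffle f is strongly nowhere injective in the topological sense: for every y ∈ 2^ω the fiber f⁻¹({y}) is a nonempty perfect subset of Cantor space (a nonempty closed set with no isolated points). -/
import Mathlib


/-- The length-`n` prefix of a real `x : ℕ → Bool`, as a finite binary string. -/
def pre (x : ℕ → Bool) (n : ℕ) : List Bool := (List.range n).map x

/-- The `h`-shuffle determined by the enumeration `a` and the hash `h`:
`f(x)(i) = x(a i) XOR h(x↾(a i))`. -/
def shuffle (a : ℕ → ℕ) (h : List Bool → Bool) (x : ℕ → Bool) : ℕ → Bool :=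
  fun i => xor (x (a i)) (h (pre x (a i)))

open scoped Classical

private lemma xor_cancel (p q : Bool) : xor (xor p q) q = p := by
  cases p <;> cases q <;> rfl

lemma pre_succ (x : ℕ → Bool) (n : ℕ) : pre x (n + 1) = pre x n ++ [x n] := by
  simp [pre, List.range_succ]

/-- the list of the first `n` values of the fiber element we build -/
noncomputable def bL (a : ℕ → ℕ) (h : List Bool → Bool) (y b : ℕ → Bool) : ℕ → List Bool
  | 0 => []
  | n + 1 => bL a h y b n ++
      [if hn : ∃ i, a i = n then xor (y hn.choose) (h (bL a h y b n)) else b n]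

/-- the fiber element we build -/
noncomputable def bF (a : ℕ → ℕ) (h : List Bool → Bool) (y b : ℕ → Bool) (n : ℕ) : Bool :=
  if hn : ∃ i, a i = n then xor (y hn.choose) (h (bL a h y b n)) else b n

lemma bL_succ (a : ℕ → ℕ) (h : List Bool → Bool) (y b : ℕ → Bool) (n : ℕ) :
    bL a h y b (n + 1) = bL a h y b n ++ [bF a h y b n] := rfl

lemma pre_bF (a : ℕ → ℕ) (h : List Bool → Bool) (y b : ℕ → Bool) :
    ∀ n, pre (bF a h y b) n = bL a h y b n := by
  intro n
  induction n with
  | zero => simp [pre, bL]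
  | succ n ih => rw [pre_succ, bL_succ, ih]

lemma shuffle_bF (a : ℕ → ℕ) (ha : Function.Injective a) (h : List Bool → Bool)
    (y b : ℕ → Bool) : shuffle a h (bF a h y b) = y := by
  funext i
  have hex : ∃ j, a j = a i := ⟨i, rfl⟩
  have hch : hex.choose = i := ha hex.choose_spec
  show xor (bF a h y b (a i)) (h (pre (bF a h y b) (a i))) = y i
  rw [pre_bF, bF, dif_pos hex, hch, xor_cancel]

lemma bL_eq_pre (a : ℕ → ℕ) (ha : Function.Injective a) (h : List Bool → Bool)
    (x y : ℕ → Bool) (hx : shuffle a h x = y) (m : ℕ) (hm : m ∉ Set.range a) :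
    ∀ n, n ≤ m → bL a h y (Function.update x m (!x m)) n = pre x n := by
  set b := Function.update x m (!x m) with hb
  intro n hn
  induction n with
  | zero => simp [pre, bL]
  | succ n ih =>
    have hnm : n < m := hn
    have ihn : bL a h y b n = pre x n := ih (le_of_lt hnm)
    rw [bL_succ, pre_succ, ihn]
    congr 2
    by_cases hex : ∃ i, a i = n
    · have hyi : y hex.choose = xor (x n) (h (pre x n)) := by
        rw [← hx]; show xor (x (a hex.choose)) (h (pre x (a hex.choose))) = _
        rw [hex.choose_spec]
      show bF a h y b n = x n
      rw [bF, dif_pos hex, ihn, hyi, xor_cancel]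
    · show bF a h y b n = x n
      rw [bF, dif_neg hex, hb, Function.update_of_ne (Nat.ne_of_lt hnm)]

lemma bF_eq_below (a : ℕ → ℕ) (ha : Function.Injective a) (h : List Bool → Bool)
    (x y : ℕ → Bool) (hx : shuffle a h x = y) (m : ℕ) (hm : m ∉ Set.range a) :
    ∀ n, n < m → bF a h y (Function.update x m (!x m)) n = x n := by
  intro n hn
  have key := bL_eq_pre a ha h x y hx m hm (n + 1) hn
  rw [bL_succ, pre_succ] at key
  have := congrArg List.getLast? key
  simpa using this

lemma bF_at_m (a : ℕ → ℕ) (ha : Function.Injective a) (h : List Bool → Bool)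
    (x y : ℕ → Bool) (hx : shuffle a h x = y) (m : ℕ) (hm : m ∉ Set.range a) :
    bF a h y (Function.update x m (!x m)) m = !x m := by
  have hex : ¬ ∃ i, a i = m := by
    rintro ⟨i, rfl⟩; exact hm ⟨i, rfl⟩
  rw [bF, dif_neg hex, Function.update_self]

lemma shuffle_loc (a : ℕ → ℕ) (h : List Bool → Bool) (x z : ℕ → Bool) (i : ℕ)
    (hz : ∀ k, k ≤ a i → z k = x k) : shuffle a h z i = shuffle a h x i := by
  have hpre : pre z (a i) = pre x (a i) := by
    apply List.map_congr_left
    intro k hk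
    exact hz k (le_of_lt (List.mem_range.mp hk))
  show xor (z (a i)) (h (pre z (a i))) = xor (x (a i)) (h (pre x (a i)))
  rw [hz (a i) le_rfl, hpre]

lemma fiber_closed (a : ℕ → ℕ) (h : List Bool → Bool) (y : ℕ → Bool) :
    IsClosed (shuffle a h ⁻¹' {y}) := by
  rw [← isOpen_compl_iff, isOpen_iff_mem_nhds]
  intro x hx
  have : shuffle a h x ≠ y := hx
  obtain ⟨i, hi⟩ : ∃ i, shuffle a h x i ≠ y i := by
    by_contra hc
    push_neg at hc
    exact this (funext hc)
  have hU : IsOpen {z : ℕ → Bool | ∀ k ∈ Finset.range (a i + 1), z k = x k} := by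
    have : {z : ℕ → Bool | ∀ k ∈ Finset.range (a i + 1), z k = x k} =
        ⋂ k ∈ Finset.range (a i + 1), (fun z : ℕ → Bool => z k) ⁻¹' {x k} := by
      ext z; simp [Set.mem_iInter]
    rw [this]
    exact isOpen_biInter_finset fun k _ =>
      (isOpen_discrete {x k}).preimage (continuous_apply k)
  apply Filter.mem_of_superset (hU.mem_nhds (by simp))
  intro z hz
  have : shuffle a h z i = shuffle a h x i :=
    shuffle_loc a h x z i fun k hk => hz k (Finset.mem_range.mpr (Nat.lt_succ_of_le hk))
  intro hzf
  apply hi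
  have hzy : shuffle a h z = y := hzf
  rw [← this, hzy]

/-- If `ℕ \ range a` is infinite, every fiber of the `h`-shuffle is a nonempty
perfect subset of Cantor space. -/
theorem shuffle_fiber_perfect (a : ℕ → ℕ) (ha : Function.Injective a)
    (h : List Bool → Bool) (hinf : (Set.range a)ᶜ.Infinite) :
    ∀ y : ℕ → Bool,
      (shuffle a h ⁻¹' {y}).Nonempty ∧ Perfect (shuffle a h ⁻¹' {y}) := by
  intro y
  refine ⟨⟨bF a h y (fun _ => false), shuffle_bF a ha h y _⟩, fiber_closed a h y, ?_⟩
  intro x hx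
  rw [accPt_iff_nhds]
  intro U hU
  rw [nhds_pi, Filter.mem_pi] at hU
  obtain ⟨I, hIfin, V, hV, hVU⟩ := hU
  obtain ⟨N, hN⟩ := hIfin.bddAbove
  obtain ⟨m, hm, hNm⟩ := hinf.exists_gt N
  set z := bF a h y (Function.update x m (!x m)) with hz
  have hxfib : shuffle a h x = y := hx
  refine ⟨z, ⟨?_, shuffle_bF a ha h y _⟩, ?_⟩
  · apply hVU
    intro i hi
    have him : i < m := lt_of_le_of_lt (hN hi) hNm
    rw [hz, bF_eq_below a ha h x y hxfib m hm i him]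
    exact mem_of_mem_nhds (hV i)
  · intro hzx
    have : z m = x m := by rw [hzx]
    rw [hz, bF_at_m a ha h x y hxfib m hm] at this
    simp at this
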